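/- Let B be a set with an injective binary operation p and injective maps R_m (m ∈ ℤ), A_n (n ≥ 2) satisfying R_m(w) = p(R_{m−1}(w), w), A₂(w) = p(w, w), A_{n+1}(w) = p(A_n(w), w), such that any two distinct maps among {R_m} ∪ {A_n : n ≥ 2} have disjoint images, and p is acyclic. Then for any injective map F : X → B (X ⊆ B) commuting with p, the R_m, and the A_n on X in the embedding sense, and for any element w, there is at most one r ∈ ℤ such that Sʳ(w) lies in the image of some map in {R_m} ∪ {A_n : n ≥ 2}, where S satisfies S(p(u,v)) = p(u, S(v)) and Sʳ(g) ≠ g for r ≠ 0. That is: if Sʳ(w) = G(u) and Sˢ(w) = H(v) for G, H ∈ {R_m} ∪ {A_n : n ≥ 2}, then r = s. -/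

import Mathlib

/-- Terms built from a single binary operation symbol. -/
inductive PTerm : Type
  | var : ℕ → PTerm
  | app : PTerm → PTerm → PTerm

/-- Evaluation of a term with respect to a binary operation and an assignment. -/
def PTerm.eval {B : Type} (p : B → B → B) (ρ : ℕ → B) : PTerm → B
  | .var n => ρ n
  | .app t s => p (t.eval p ρ) (s.eval p ρ)

/-- The variable i occurs in the term. -/
def PTerm.Occurs (i : ℕ) : PTerm → Prop
  | .var n => i = n
  | .app t s => t.Occurs i ∨ s.Occurs i

/-- Uniqueness of the shift: given an injective acyclic pairing p, injective families
R_m (m ∈ ℤ) and A_n (n ≥ 2) with R_m(w) = p(R_{m−1}(w), w), A₂(w) = p(w,w),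
A_{n+1}(w) = p(A_n(w), w), pairwise disjoint images, and a bijection S with
S(p(u,v)) = p(u, S(v)) and no periodic points, then: if Sʳ(w) = G(u) and
Sˢ(w) = H(v) for G, H among the R_m and A_n (n ≥ 2), then r = s. -/
theorem shift_unique {B : Type} (p : B → B → B)
    (hinj : ∀ a b c d : B, p a b = p c d → a = c ∧ b = d)
    (hne : ∀ x y : B, p x y ≠ y)
    (hacyc : ∀ t : PTerm, (∀ n, t ≠ .var n) → ∀ ρ : ℕ → B, ∀ i, t.Occurs i →
      t.eval p ρ ≠ ρ i)
    (R : ℤ → B → B)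
    (hR : ∀ (m : ℤ) (w : B), R m w = p (R (m - 1) w) w)
    (hRinj : ∀ m : ℤ, Function.Injective (R m))
    (A : ℕ → B → B)
    (hA2 : ∀ w, A 2 w = p w w)
    (hAsucc : ∀ n, 2 ≤ n → ∀ w, A (n + 1) w = p (A n w) w)
    (hAinj : ∀ n, 2 ≤ n → Function.Injective (A n))
    (hdRR : ∀ m m' : ℤ, m ≠ m' → ∀ u v : B, R m u ≠ R m' v)
    (hdAA : ∀ n n' : ℕ, 2 ≤ n → 2 ≤ n' → n ≠ n' → ∀ u v : B, A n u ≠ A n' v)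
    (hdRA : ∀ (m : ℤ) (n : ℕ), 2 ≤ n → ∀ u v : B, R m u ≠ A n v)
    (e : Equiv.Perm B)
    (hcomm : ∀ u v : B, e (p u v) = p u (e v))
    (hper : ∀ (g : B) (r : ℤ), r ≠ 0 → (e ^ r) g ≠ g) :
    ∀ (r s : ℤ) (w u v : B) (G H : B → B),
      ((∃ m : ℤ, G = R m) ∨ (∃ n : ℕ, 2 ≤ n ∧ G = A n)) →
      ((∃ m : ℤ, H = R m) ∨ (∃ n : ℕ, 2 ≤ n ∧ H = A n)) →
      (e ^ r) w = G u → (e ^ s) w = H v → r = s := by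
  -- e^k commutes with p a · for all integer k
  have hcomm' : ∀ a b : B, e⁻¹ (p a b) = p a (e⁻¹ b) := by
    intro a b
    have h := hcomm a (e⁻¹ b)
    simp only [Equiv.Perm.coe_inv, Equiv.apply_symm_apply] at h
    rw [← h, Equiv.Perm.coe_inv, Equiv.symm_apply_apply]
  have hcommZ : ∀ (k : ℤ) (a b : B), (e ^ k) (p a b) = p a ((e ^ k) b) := by
    intro k
    induction k using Int.induction_on with
    | zero => intro a b; simp
    | succ n ih =>
      intro a b
      have h1 : (e ^ ((n : ℤ) + 1)) = e ^ (n : ℤ) * e := by rw [zpow_add_one]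
      rw [h1, Equiv.Perm.mul_apply, Equiv.Perm.mul_apply, hcomm, ih]
    | pred n ih =>
      intro a b
      have h1 : (e ^ (-(n : ℤ) - 1)) = e ^ (-(n : ℤ)) * e⁻¹ := by rw [zpow_sub_one]
      rw [h1, Equiv.Perm.mul_apply, Equiv.Perm.mul_apply, hcomm', ih]
  have hinvk : ∀ (k : ℤ) (x : B), (e ^ (-k)) ((e ^ k) x) = x := by
    intro k x
    rw [← Equiv.Perm.mul_apply, ← zpow_add]
    simp
  -- acyclicity consequences
  have key : ∀ c d y : B, c = p d (p c y) → False := by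
    intro c d y h
    have := hacyc (.app (.var 0) (.app (.var 1) (.var 2)))
      (fun n hn => PTerm.noConfusion hn)
      (fun i => if i = 0 then d else if i = 1 then c else y) 1
      (Or.inr (Or.inl rfl))
    apply this
    simp only [PTerm.eval]
    norm_num
    exact h.symm
  have key2 : ∀ x y : B, x = p x y → False := by
    intro x y h
    have := hacyc (.app (.var 0) (.var 1))
      (fun n hn => PTerm.noConfusion hn)
      (fun i => if i = 0 then x else y) 0
      (Or.inl rfl)
    apply this
    simp only [PTerm.eval]
    norm_num
    exact h.symm
  -- every A n (n ≥ 2) has the form p d x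
  have hAd : ∀ n, 2 ≤ n → ∀ x : B, ∃ d, A n x = p d x := by
    intro n hn x
    rcases eq_or_lt_of_le hn with h2 | h3
    · exact ⟨x, by rw [← h2, hA2]⟩
    · obtain ⟨m, rfl⟩ : ∃ m, n = m + 1 := ⟨n - 1, by omega⟩
      exact ⟨A m x, hAsucc m (by omega) x⟩
  -- no e-power can send R m x back to x
  have hLR : ∀ (k m : ℤ) (x : B), (e ^ k) (R m x) = x → False := by
    intro k m x hx
    have hx' : x = p (R (m - 1) x) ((e ^ k) x) := by
      conv_lhs => rw [← hx, hR]
      rw [hcommZ]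
    refine key (R (m - 1) x) (R (m - 1 - 1) x) ((e ^ k) x) ?_
    exact (hR (m - 1) x).trans (congrArg (p (R (m - 1 - 1) x)) hx')
  -- no e-power can send A n x back to x
  have hLA : ∀ (k : ℤ) (n : ℕ) (x : B), 2 ≤ n → (e ^ k) (A n x) = x → False := by
    intro k n x hn hx
    rcases eq_or_lt_of_le hn with h2 | h3
    · have hx' : x = p x ((e ^ k) x) := by
        conv_lhs => rw [← hx, ← h2, hA2]
        rw [hcommZ]
      exact key2 _ _ hx'
    · obtain ⟨m, rfl⟩ : ∃ m, n = m + 1 := ⟨n - 1, by omega⟩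
      have hm : 2 ≤ m := by omega
      have hx' : x = p (A m x) ((e ^ k) x) := by
        conv_lhs => rw [← hx, hAsucc m hm]
        rw [hcommZ]
      obtain ⟨d, hd⟩ := hAd m hm x
      refine key (A m x) d ((e ^ k) x) ?_
      exact hd.trans (congrArg (p d) hx')
  intro r s w u v G H hG hH hGu hHv
  set k := s - r with hk
  have hks : k + r = s := by omega
  have hstep : (e ^ s) w = (e ^ k) (G u) := by
    rw [← hGu, ← Equiv.Perm.mul_apply, ← zpow_add, hks]
  -- decompose G u = p g u with structural info on g
  have hGdec : ∃ g : B, G u = p g u ∧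
      ((∃ m : ℤ, g = R m u) ∨ g = u ∨ (∃ n : ℕ, 2 ≤ n ∧ g = A n u)) := by
    rcases hG with ⟨m, rfl⟩ | ⟨n, hn, rfl⟩
    · exact ⟨R (m - 1) u, hR m u, Or.inl ⟨m - 1, rfl⟩⟩
    · rcases eq_or_lt_of_le hn with h2 | h3
      · exact ⟨u, by rw [← h2, hA2], Or.inr (Or.inl rfl)⟩
      · obtain ⟨q, rfl⟩ : ∃ q, n = q + 1 := ⟨n - 1, by omega⟩
        exact ⟨A q u, hAsucc q (by omega) u, Or.inr (Or.inr ⟨q, by omega, rfl⟩)⟩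
  have hHdec : ∃ h : B, H v = p h v ∧
      ((∃ m : ℤ, h = R m v) ∨ h = v ∨ (∃ n : ℕ, 2 ≤ n ∧ h = A n v)) := by
    rcases hH with ⟨m, rfl⟩ | ⟨n, hn, rfl⟩
    · exact ⟨R (m - 1) v, hR m v, Or.inl ⟨m - 1, rfl⟩⟩
    · rcases eq_or_lt_of_le hn with h2 | h3
      · exact ⟨v, by rw [← h2, hA2], Or.inr (Or.inl rfl)⟩
      · obtain ⟨q, rfl⟩ : ∃ q, n = q + 1 := ⟨n - 1, by omega⟩
        exact ⟨A q v, hAsucc q (by omega) v, Or.inr (Or.inr ⟨q, by omega, rfl⟩)⟩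
  obtain ⟨g, hg, hgcase⟩ := hGdec
  obtain ⟨h, hh, hhcase⟩ := hHdec
  have hmain : p g ((e ^ k) u) = p h v := by rw [← hh, ← hHv, hstep, hg, hcommZ]
  obtain ⟨hgh, hkuv⟩ := hinj _ _ _ _ hmain
  -- from u = v conclude r = s
  have finish : u = v → r = s := by
    intro huv
    by_contra hrs
    exact hper u k (by omega) (by rw [hkuv, huv])
  rcases hgcase with ⟨m, rfl⟩ | rfl | ⟨n, hn, rfl⟩
  · rcases hhcase with ⟨m', rfl⟩ | rfl | ⟨n', hn', rfl⟩
    · -- R vs R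
      rcases eq_or_ne m m' with rfl | hmm
      · exact finish (hRinj m hgh)
      · exact absurd hgh (hdRR m m' hmm u v)
    · -- R vs A2 : e^k u = R m u
      exact absurd (by rw [hgh, ← hkuv]; exact hinvk k u) (fun hc => hLR (-k) m u hc)
    · -- R vs A(n≥2) : disjointness
      exact absurd hgh (hdRA m n' hn' u v)
  · rcases hhcase with ⟨m', rfl⟩ | rfl | ⟨n', hn', rfl⟩
    · -- A2 vs R : u = R m' v, e^k u = v
      exact absurd (by rw [hgh] at hkuv; exact hkuv) (fun hc => hLR k m' v hc)
    · -- A2 vs A2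
      exact finish hgh
    · -- A2 vs A(n≥2) : u = A n' v, e^k u = v
      exact absurd (by rw [hgh] at hkuv; exact hkuv) (fun hc => hLA k n' v hn' hc)
  · rcases hhcase with ⟨m', rfl⟩ | rfl | ⟨n', hn', rfl⟩
    · -- A(n≥2) vs R : disjointness
      exact absurd hgh.symm (hdRA m' n hn v u)
    · -- A(n≥2) vs A2 : e^k u = A n u
      exact absurd (by rw [hgh, ← hkuv]; exact hinvk k u) (fun hc => hLA (-k) n u hn hc)
    · -- A vs A
      rcases eq_or_ne n n' with rfl | hnn
      · exact finish (hAinj n hn hgh)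
      · exact absurd hgh (hdAA n n' hn hn' hnn u v)
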